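/- For any tree T on n ≥ 3 vertices, γ(T) ≤ n/(2n−3), with equality if and only if T is isomorphic to the star S_n. -/

import Mathlib

open Finset SimpleGraph

/-- `max_{uv ∈ E(G)} |x_u - x_v|` (as a real supremum over adjacent pairs). -/
noncomputable def edgeSup {V : Type*} (G : SimpleGraph V) (x : V → ℝ) : ℝ :=
  ⨆ p : {p : V × V // G.Adj p.1 p.2}, |x p.1.1 - x p.1.2|

/-- The `l_∞`-smoothing parameter `γ(G)`. -/
noncomputable def gamma {V : Type*} [Fintype V] (G : SimpleGraph V) : ℝ :=
  sInf {y | ∃ x : V → ℝ, (∑ v, x v) = 0 ∧ (⨆ v, |x v|) = 1 ∧ y = edgeSup G x}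

/-- Transmission of a vertex: sum of graph distances to all vertices. -/
noncomputable def transmission {V : Type*} [Fintype V] (G : SimpleGraph V) (u : V) : ℕ :=
  ∑ v, G.dist u v

/-- The star graph on `n` vertices: vertex `0` is adjacent to all others. -/
def starGraph (n : ℕ) : SimpleGraph (Fin n) :=
  SimpleGraph.fromRel (fun u _ => u.val = 0)

lemma edgeSup_bdd {V : Type*} [Finite V] (G : SimpleGraph V) (x : V → ℝ) :
    BddAbove (Set.range fun p : {p : V × V // G.Adj p.1 p.2} => |x p.1.1 - x p.1.2|) :=
  (Set.finite_range _).bddAbove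

lemma abs_sub_le_edgeSup {V : Type*} [Finite V] {G : SimpleGraph V} (x : V → ℝ) {a b : V}
    (h : G.Adj a b) : |x a - x b| ≤ edgeSup G x :=
  le_ciSup (edgeSup_bdd G x) ⟨(a, b), h⟩

lemma edgeSup_nonneg {V : Type*} (G : SimpleGraph V) (x : V → ℝ) : 0 ≤ edgeSup G x :=
  Real.iSup_nonneg fun _ => abs_nonneg _

lemma abs_sub_le_walk {V : Type*} [Finite V] {G : SimpleGraph V} (x : V → ℝ) {a b : V}
    (p : G.Walk a b) : |x a - x b| ≤ p.length * edgeSup G x := by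
  induction p with
  | nil => simp
  | @cons u v w h q ih =>
    calc |x u - x w| ≤ |x u - x v| + |x v - x w| := abs_sub_le _ _ _
    _ ≤ edgeSup G x + q.length * edgeSup G x := add_le_add (abs_sub_le_edgeSup x h) ih
    _ = (Walk.cons h q).length * edgeSup G x := by
        simp [Walk.length_cons]; ring

lemma abs_sub_le_dist {V : Type*} [Finite V] {G : SimpleGraph V} (hc : G.Connected)
    (x : V → ℝ) (a b : V) : |x a - x b| ≤ G.dist a b * edgeSup G x := by
  obtain ⟨p, hp⟩ := hc.exists_walk_length_eq_dist a b
  simpa [hp] using abs_sub_le_walk x p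

lemma gamma_eq {V : Type*} [Fintype V] {G : SimpleGraph V} (hc : G.Connected)
    (hn : 2 ≤ Fintype.card V) {u : V} (hu : ∀ v, transmission G v ≤ transmission G u) :
    gamma G = (Fintype.card V : ℝ) / (transmission G u : ℝ) := by
  classical
  set n : ℕ := Fintype.card V with hndef
  have hne : Nonempty V := Fintype.card_pos_iff.mp (by omega)
  -- u has a neighbor
  obtain ⟨v0, hv0⟩ : ∃ v0 : V, v0 ≠ u := by
    by_contra h
    push_neg at h
    have : Fintype.card V ≤ 1 := Fintype.card_le_one_iff.mpr fun a b => (h a).trans (h b).symm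
    omega
  have hdpos : 0 < G.dist u v0 := hc.pos_dist_of_ne (Ne.symm hv0)
  obtain ⟨p0, hp0⟩ := hc.exists_walk_length_eq_dist u v0
  have hadj : ∃ w, G.Adj u w := by
    cases p0 with
    | nil => simp [SimpleGraph.dist_self] at hdpos
    | cons h q => exact ⟨_, h⟩
  obtain ⟨w0, hw0⟩ := hadj
  -- transmission positivity
  have htrpos : 0 < transmission G u := by
    have : 0 < ∑ v, G.dist u v := by
      apply Finset.sum_pos' (fun _ _ => Nat.zero_le _) ⟨v0, Finset.mem_univ _, hdpos⟩
    simpa [transmission] using this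
  set t : ℝ := (transmission G u : ℝ) with htdef
  have htpos : (0:ℝ) < t := by rw [htdef]; exact_mod_cast htrpos
  have hnpos : (0:ℝ) < (n:ℝ) := by positivity -- n ≥ 2
  -- key distance bound: n * d(u,v) ≤ 2 * tr u
  have hkey : ∀ v : V, (n:ℕ) * G.dist u v ≤ 2 * transmission G u := by
    intro v
    have h1 : (n:ℕ) * G.dist u v = ∑ _w : V, G.dist u v := by
      simp [hndef, Finset.sum_const, mul_comm]
    have h2 : ∑ _w : V, G.dist u v ≤ ∑ w : V, (G.dist u w + G.dist w v) :=
      Finset.sum_le_sum fun w _ => hc.dist_triangle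
    have h3 : ∑ w : V, (G.dist u w + G.dist w v) = transmission G u + transmission G v := by
      rw [Finset.sum_add_distrib, transmission, transmission]
      congr 1
      exact Finset.sum_congr rfl fun w _ => dist_comm
    have h4 := hu v
    omega
  -- the test vector
  set x : V → ℝ := fun v => ((G.dist u v : ℝ) * n - t) / t with hxdef
  have hsum : (∑ v, x v) = 0 := by
    have hs : ∑ v, ((G.dist u v : ℝ)) = t := by
      rw [htdef, transmission]
      push_cast
      rfl
    rw [hxdef]
    simp only
    rw [← Finset.sum_div, Finset.sum_sub_distrib, ← Finset.sum_mul, hs]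
    simp [Finset.sum_const, mul_comm, hndef]
  have habs : ∀ v, |x v| ≤ 1 := by
    intro v
    rw [hxdef]
    simp only
    rw [abs_div, abs_of_pos htpos, div_le_one htpos]
    rw [abs_le]
    constructor
    · have : (0:ℝ) ≤ (G.dist u v : ℝ) * n := by positivity
      linarith
    · have := hkey v
      have h5 : ((n:ℕ) * G.dist u v : ℝ) ≤ ((2 * transmission G u : ℕ) : ℝ) := by
        exact_mod_cast this
      push_cast at h5
      rw [htdef]
      push_cast
      linarith
  have hxu : x u = -1 := by
    rw [hxdef]
    simp [SimpleGraph.dist_self, htpos.ne']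
  have hsup : (⨆ v, |x v|) = 1 := by
    apply le_antisymm
    · exact ciSup_le habs
    · have : |x u| = 1 := by rw [hxu]; simp
      rw [← this]
      exact le_ciSup (f := fun v => |x v|) ((Set.finite_range _).bddAbove) u
  have hnonemptyE : Nonempty {p : V × V // G.Adj p.1 p.2} := ⟨⟨(u, w0), hw0⟩⟩
  have hedge : edgeSup G x ≤ (n:ℝ) / t := by
    apply ciSup_le
    rintro ⟨⟨a, b⟩, hab⟩
    simp only [hxdef]
    rw [div_sub_div_same, abs_div, abs_of_pos htpos, div_le_div_iff₀ htpos htpos]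
    have hd1 : G.dist u a ≤ G.dist u b + 1 := by
      have := hc.dist_triangle (u := u) (v := b) (w := a)
      have hba : G.dist b a = 1 := by
        rw [SimpleGraph.dist_eq_one_iff_adj]
        exact hab.symm
      omega
    have hd2 : G.dist u b ≤ G.dist u a + 1 := by
      have := hc.dist_triangle (u := u) (v := a) (w := b)
      have hba : G.dist a b = 1 := by
        rw [SimpleGraph.dist_eq_one_iff_adj]
        exact hab
      omega
    have : |(G.dist u a : ℝ) - (G.dist u b : ℝ)| ≤ 1 := by
      rw [abs_le]
      constructor
      · have : (G.dist u b : ℝ) ≤ (G.dist u a : ℝ) + 1 := by exact_mod_cast hd2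
        linarith
      · have : (G.dist u a : ℝ) ≤ (G.dist u b : ℝ) + 1 := by exact_mod_cast hd1
        linarith
    have hA : (G.dist u a : ℝ) * n - t - ((G.dist u b : ℝ) * n - t)
        = ((G.dist u a : ℝ) - (G.dist u b : ℝ)) * (n:ℝ) := by ring
    rw [hA, abs_mul, abs_of_pos hnpos]
    have ht1 : (1:ℝ) ≤ t := by
      rw [htdef]; exact_mod_cast htrpos
    have habs2 : (0:ℝ) ≤ |(G.dist u a : ℝ) - (G.dist u b : ℝ)| := abs_nonneg _
    nlinarith [mul_le_mul_of_nonneg_right this hnpos.le,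
      mul_le_mul_of_nonneg_left ht1 hnpos.le]
  -- membership
  have hmem : edgeSup G x ∈ {y | ∃ x : V → ℝ, (∑ v, x v) = 0 ∧ (⨆ v, |x v|) = 1 ∧ y = edgeSup G x} :=
    ⟨x, hsum, hsup, rfl⟩
  -- lower bound for every member
  have hlb : ∀ y ∈ {y | ∃ x : V → ℝ, (∑ v, x v) = 0 ∧ (⨆ v, |x v|) = 1 ∧ y = edgeSup G x},
      (n:ℝ) / t ≤ y := by
    rintro y ⟨z, hzsum, hzsup, rfl⟩
    set M := edgeSup G z with hM
    have hMnn : 0 ≤ M := edgeSup_nonneg G z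
    obtain ⟨a, -, ha⟩ := Finset.exists_max_image Finset.univ (fun v => |z v|)
      ⟨Classical.arbitrary V, Finset.mem_univ _⟩
    have haa : |z a| = 1 := by
      apply le_antisymm
      · rw [← hzsup]
        exact le_ciSup (f := fun v => |z v|) ((Set.finite_range _).bddAbove) a
      · rw [← hzsup]
        exact ciSup_le fun v => ha v (Finset.mem_univ v)
    have hstep : (n:ℝ) ≤ (transmission G a : ℝ) * M := by
      have h1 : (n:ℝ) = |∑ v, (z a - z v)| := by
        rw [Finset.sum_sub_distrib, hzsum, sub_zero, Finset.sum_const, nsmul_eq_mul,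
          abs_mul, haa, Nat.abs_cast]
        simp [hndef]
      have h2 : |∑ v, (z a - z v)| ≤ ∑ v, |z a - z v| := Finset.abs_sum_le_sum_abs _ _
      have h3 : ∑ v, |z a - z v| ≤ ∑ v, (G.dist a v : ℝ) * M :=
        Finset.sum_le_sum fun v _ => abs_sub_le_dist hc z a v
      have h4 : ∑ v, (G.dist a v : ℝ) * M = (transmission G a : ℝ) * M := by
        rw [← Finset.sum_mul, transmission]
        push_cast
        rfl
      linarith
    have htra : (transmission G a : ℝ) ≤ t := by
      rw [htdef]; exact_mod_cast hu a
    have : (n:ℝ) ≤ t * M := by nlinarith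
    rw [div_le_iff₀ htpos]
    linarith [this]
  have hbdd : BddBelow {y | ∃ x : V → ℝ, (∑ v, x v) = 0 ∧ (⨆ v, |x v|) = 1 ∧ y = edgeSup G x} := by
    refine ⟨0, ?_⟩
    rintro y ⟨z, -, -, rfl⟩
    exact edgeSup_nonneg G z
  apply le_antisymm
  · calc gamma G ≤ edgeSup G x := csInf_le hbdd hmem
    _ ≤ (n:ℝ) / t := hedge
  · exact le_csInf ⟨edgeSup G x, hmem⟩ hlb

-- sum helpers
lemma sum_helper2 {α : Type*} [Fintype α] [DecidableEq α] {a b : α} (hab : a ≠ b) :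
    ∑ w : α, (if w = a then 0 else if w = b then (1:ℕ) else 2) = 2 * Fintype.card α - 3 := by
  rw [← Finset.add_sum_erase _ _ (Finset.mem_univ a)]
  rw [← Finset.add_sum_erase _ _ (Finset.mem_erase.mpr ⟨hab.symm, Finset.mem_univ b⟩)]
  rw [if_pos rfl, if_neg hab.symm, if_pos rfl]
  have : ∑ w ∈ (Finset.univ.erase a).erase b, (if w = a then 0 else if w = b then (1:ℕ) else 2)
      = ∑ _w ∈ (Finset.univ.erase a).erase b, 2 := by
    apply Finset.sum_congr rfl
    intro w hw
    rw [if_neg, if_neg]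
    · exact (Finset.mem_erase.mp hw).1
    · exact (Finset.mem_erase.mp (Finset.mem_erase.mp hw).2).1
  rw [this, Finset.sum_const, Finset.card_erase_of_mem
    (Finset.mem_erase.mpr ⟨hab.symm, Finset.mem_univ b⟩), Finset.card_erase_of_mem
    (Finset.mem_univ a), Finset.card_univ]
  have hcard : 2 ≤ Fintype.card α := Fintype.one_lt_card_iff_nontrivial.mpr ⟨⟨a, b, hab⟩⟩
  simp only [smul_eq_mul]
  omega

lemma sum_helper3 {α : Type*} [Fintype α] [DecidableEq α] {a b c : α} (hab : a ≠ b)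
    (hac : a ≠ c) (hbc : b ≠ c) :
    ∑ w : α, (if w = a then 0 else if w = b then (1:ℕ) else if w = c then 3 else 2)
      = 2 * Fintype.card α - 2 := by
  rw [← Finset.add_sum_erase _ _ (Finset.mem_univ a)]
  rw [← Finset.add_sum_erase _ _ (Finset.mem_erase.mpr ⟨hab.symm, Finset.mem_univ b⟩)]
  rw [← Finset.add_sum_erase _ _ (Finset.mem_erase.mpr ⟨hbc.symm,
    Finset.mem_erase.mpr ⟨hac.symm, Finset.mem_univ c⟩⟩)]
  rw [if_pos rfl, if_neg hab.symm, if_pos rfl, if_neg hac.symm, if_neg hbc.symm, if_pos rfl]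
  have : ∑ w ∈ ((Finset.univ.erase a).erase b).erase c,
      (if w = a then 0 else if w = b then (1:ℕ) else if w = c then 3 else 2)
      = ∑ _w ∈ ((Finset.univ.erase a).erase b).erase c, 2 := by
    apply Finset.sum_congr rfl
    intro w hw
    have h1 := (Finset.mem_erase.mp hw).1
    have h2 := (Finset.mem_erase.mp (Finset.mem_erase.mp hw).2).1
    have h3 := (Finset.mem_erase.mp (Finset.mem_erase.mp (Finset.mem_erase.mp hw).2).2).1
    rw [if_neg h3, if_neg h2, if_neg h1]
  rw [this, Finset.sum_const]
  rw [Finset.card_erase_of_mem (Finset.mem_erase.mpr ⟨hbc.symm,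
    Finset.mem_erase.mpr ⟨hac.symm, Finset.mem_univ c⟩⟩)]
  rw [Finset.card_erase_of_mem (Finset.mem_erase.mpr ⟨hab.symm, Finset.mem_univ b⟩)]
  rw [Finset.card_erase_of_mem (Finset.mem_univ a), Finset.card_univ]
  have hcard : 3 ≤ Fintype.card α := by
    have : ({a, b, c} : Finset α).card = 3 := by
      rw [Finset.card_insert_of_notMem (by simp [hab, hac]),
        Finset.card_insert_of_notMem (by simp [hbc]), Finset.card_singleton]
    calc 3 = ({a, b, c} : Finset α).card := this.symm
    _ ≤ Fintype.card α := Finset.card_le_univ _ |>.trans_eq (Finset.card_univ)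
  simp only [smul_eq_mul]
  omega

-- a tree with at least 2 vertices has a leaf: a vertex whose neighbors are exactly {w}
lemma exists_leaf {V : Type*} [Fintype V] {T : SimpleGraph V} (hT : T.IsTree)
    (hn : 2 ≤ Fintype.card V) : ∃ u w : V, ∀ v, T.Adj u v ↔ v = w := by
  classical
  have hconn := hT.isConnected
  -- degree sum
  have hedges : T.edgeFinset.card = Fintype.card V - 1 := by
    have := hT.card_edgeFinset
    omega
  have hsum : ∑ v, T.degree v = 2 * (Fintype.card V - 1) := by
    rw [T.sum_degrees_eq_twice_card_edges, hedges]
  have hdegpos : ∀ v : V, 0 < T.degree v := by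
    intro v
    obtain ⟨v2, hv2⟩ : ∃ v2 : V, v2 ≠ v := by
      by_contra h
      push_neg at h
      have : Fintype.card V ≤ 1 := Fintype.card_le_one_iff.mpr fun a b => (h a).trans (h b).symm
      omega
    have hd : 0 < T.dist v v2 := hconn.pos_dist_of_ne (Ne.symm hv2)
    obtain ⟨p, hp⟩ := hconn.exists_walk_length_eq_dist v v2
    cases p with
    | nil => simp [SimpleGraph.dist_self] at hd
    | cons h q =>
      exact (SimpleGraph.degree_pos_iff_exists_adj T v).mpr ⟨_, h⟩
  have hleaf : ∃ u : V, T.degree u = 1 := by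
    by_contra h
    push_neg at h
    have h2 : ∀ v : V, 2 ≤ T.degree v := by
      intro v
      have := hdegpos v
      have := h v
      omega
    have : 2 * Fintype.card V ≤ ∑ v, T.degree v := by
      calc 2 * Fintype.card V = ∑ _v : V, 2 := by simp [Finset.sum_const, mul_comm]
      _ ≤ ∑ v, T.degree v := Finset.sum_le_sum fun v _ => h2 v
    omega
  obtain ⟨u, hu⟩ := hleaf
  rw [← SimpleGraph.card_neighborFinset_eq_degree, Finset.card_eq_one] at hu
  obtain ⟨w, hw⟩ := hu
  refine ⟨u, w, fun v => ?_⟩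
  rw [← SimpleGraph.mem_neighborFinset, hw, Finset.mem_singleton]

lemma dist_ge_two {V : Type*} {T : SimpleGraph V} (hconn : T.Connected) {u w v : V}
    (hleaf : ∀ v, T.Adj u v ↔ v = w) (hvu : v ≠ u) (hvw : v ≠ w) : 2 ≤ T.dist u v := by
  have h0 : T.dist u v ≠ 0 := by
    rw [Ne, hconn.dist_eq_zero_iff]
    exact fun h => hvu h.symm
  have h1 : T.dist u v ≠ 1 := by
    rw [Ne, SimpleGraph.dist_eq_one_iff_adj, hleaf]
    exact hvw
  omega

lemma leaf_transmission {V : Type*} [Fintype V] {T : SimpleGraph V} (hconn : T.Connected)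
    {u w : V} (hleaf : ∀ v, T.Adj u v ↔ v = w) :
    2 * Fintype.card V - 3 ≤ transmission T u := by
  classical
  have huw : u ≠ w := (T.ne_of_adj ((hleaf w).mpr rfl))
  calc 2 * Fintype.card V - 3
      = ∑ v : V, (if v = u then 0 else if v = w then (1:ℕ) else 2) := (sum_helper2 huw).symm
    _ ≤ ∑ v : V, T.dist u v := by
        apply Finset.sum_le_sum
        intro v _
        by_cases h1 : v = u
        · simp [h1]
        by_cases h2 : v = w
        · subst h2
          rw [if_neg h1, if_pos rfl]
          have : T.dist u v = 1 := SimpleGraph.dist_eq_one_iff_adj.mpr ((hleaf v).mpr rfl)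
          omega
        · rw [if_neg h1, if_neg h2]
          exact dist_ge_two hconn hleaf h1 h2
    _ = transmission T u := rfl

lemma leaf_transmission_nonstar {V : Type*} [Fintype V] {T : SimpleGraph V} (hconn : T.Connected)
    {u w z : V} (hleaf : ∀ v, T.Adj u v ↔ v = w) (hz : z ≠ w) (hnadj : ¬T.Adj w z) :
    2 * Fintype.card V - 2 ≤ transmission T u := by
  classical
  have huw : u ≠ w := T.ne_of_adj ((hleaf w).mpr rfl)
  have hzu : z ≠ u := by
    rintro rfl
    exact hnadj ((hleaf w).mpr rfl).symm
  have hd3 : 3 ≤ T.dist u z := by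
    have h2 : 2 ≤ T.dist u z := dist_ge_two hconn hleaf hzu hz
    have hne2 : T.dist u z ≠ 2 := by
      intro h2'
      obtain ⟨p, hp⟩ := hconn.exists_walk_length_eq_dist u z
      rw [h2'] at hp
      cases p with
      | nil => simp at hp
      | cons h q =>
        cases q with
        | nil => simp at hp
        | cons h' q' =>
          cases q' with
          | nil =>
            have hm := (hleaf _).mp h
            exact hnadj (hm ▸ h')
          | cons h'' q'' => simp [Nat.succ_ne_zero] at hp
    omega
  calc 2 * Fintype.card V - 2
      = ∑ v : V, (if v = u then 0 else if v = w then (1:ℕ) else if v = z then 3 else 2) :=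
        (sum_helper3 huw (Ne.symm hzu) (Ne.symm hz)).symm
    _ ≤ ∑ v : V, T.dist u v := by
        apply Finset.sum_le_sum
        intro v _
        by_cases h1 : v = u
        · simp [h1]
        by_cases h2 : v = w
        · subst h2
          rw [if_neg h1, if_pos rfl]
          have : T.dist u v = 1 := SimpleGraph.dist_eq_one_iff_adj.mpr ((hleaf v).mpr rfl)
          omega
        by_cases h3 : v = z
        · subst h3
          rw [if_neg h1, if_neg h2, if_pos rfl]
          exact hd3
        · rw [if_neg h1, if_neg h2, if_neg h3]
          exact dist_ge_two hconn hleaf h1 h2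
    _ = transmission T u := rfl

lemma starGraph_adj {n : ℕ} [NeZero n] {s t : Fin n} :
    (_root_.starGraph n).Adj s t ↔ s ≠ t ∧ (s = 0 ∨ t = 0) := by
  simp only [_root_.starGraph, SimpleGraph.fromRel_adj]
  constructor
  · rintro ⟨h, h2 | h2⟩
    · exact ⟨h, Or.inl (Fin.ext h2)⟩
    · exact ⟨h, Or.inr (Fin.ext h2)⟩
  · rintro ⟨h, rfl | rfl⟩
    · exact ⟨h, Or.inl rfl⟩
    · exact ⟨h, Or.inr rfl⟩

lemma starGraph_connected {n : ℕ} [NeZero n] : (_root_.starGraph n).Connected := by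
  rw [SimpleGraph.connected_iff]
  refine ⟨fun s t => ?_, ⟨0⟩⟩
  have key : ∀ s : Fin n, (_root_.starGraph n).Reachable s 0 := by
    intro s
    by_cases h : s = 0
    · rw [h]
    · exact (SimpleGraph.Adj.reachable (_root_.starGraph_adj.mpr ⟨h, Or.inr rfl⟩))
  exact (key s).trans (key t).symm

lemma starGraph_dist_le_two {n : ℕ} [NeZero n] (s t : Fin n) :
    (_root_.starGraph n).dist s t ≤ 2 := by
  by_cases hst : s = t
  · rw [hst, SimpleGraph.dist_self]; omega
  by_cases hs : s = 0
  · have : (_root_.starGraph n).Adj s t := _root_.starGraph_adj.mpr ⟨hst, Or.inl hs⟩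
    rw [SimpleGraph.dist_eq_one_iff_adj.mpr this]; omega
  by_cases ht : t = 0
  · have : (_root_.starGraph n).Adj s t := _root_.starGraph_adj.mpr ⟨hst, Or.inr ht⟩
    rw [SimpleGraph.dist_eq_one_iff_adj.mpr this]; omega
  · have h1 : (_root_.starGraph n).Adj s 0 := _root_.starGraph_adj.mpr ⟨hs, Or.inr rfl⟩
    have h2 : (_root_.starGraph n).Adj 0 t := _root_.starGraph_adj.mpr ⟨fun h => ht h.symm, Or.inl rfl⟩
    have := SimpleGraph.dist_le (SimpleGraph.Walk.cons h1 (SimpleGraph.Walk.cons h2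
      SimpleGraph.Walk.nil))
    simpa using this

lemma starGraph_transmission {n : ℕ} (hn : 3 ≤ n) (p : Fin n) :
    transmission (_root_.starGraph n) p ≤ 2 * n - 3 := by
  haveI : NeZero n := ⟨by omega⟩
  by_cases hp : p = 0
  · -- all distances ≤ 1
    have : transmission (_root_.starGraph n) p ≤ ∑ w : Fin n, (if w = p then 0 else 1) := by
      apply Finset.sum_le_sum
      intro w _
      by_cases h : w = p
      · simp [h, SimpleGraph.dist_self]
      · rw [if_neg h]
        have : (_root_.starGraph n).Adj p w := _root_.starGraph_adj.mpr ⟨fun hh => h hh.symm, Or.inl hp⟩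
        rw [SimpleGraph.dist_eq_one_iff_adj.mpr this]
    have h2 : ∑ w : Fin n, (if w = p then 0 else (1:ℕ)) = n - 1 := by
      rw [← Finset.add_sum_erase _ _ (Finset.mem_univ p), if_pos rfl]
      have he : ∑ w ∈ Finset.univ.erase p, (if w = p then 0 else (1:ℕ))
          = ∑ _w ∈ Finset.univ.erase p, 1 :=
        Finset.sum_congr rfl fun w hw => if_neg (Finset.mem_erase.mp hw).1
      rw [he, Finset.sum_const, Finset.card_erase_of_mem (Finset.mem_univ p), Finset.card_univ]
      simp
    omega
  · have : transmission (_root_.starGraph n) p ≤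
        ∑ w : Fin n, (if w = p then 0 else if w = 0 then 1 else 2) := by
      apply Finset.sum_le_sum
      intro w _
      by_cases h : w = p
      · simp [h, SimpleGraph.dist_self]
      by_cases h0 : w = 0
      · rw [if_neg h, if_pos h0]
        have : (_root_.starGraph n).Adj p w := _root_.starGraph_adj.mpr ⟨fun hh => h hh.symm, Or.inr h0⟩
        rw [SimpleGraph.dist_eq_one_iff_adj.mpr this]
      · rw [if_neg h, if_neg h0]
        exact starGraph_dist_le_two p w
    have h2 := sum_helper2 (a := p) (b := (0 : Fin n)) hp
    simp only [Fintype.card_fin] at h2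
    omega

-- distances transfer across isos (one direction suffices)
lemma dist_le_of_iso {V W : Type*} {G : SimpleGraph V} {H : SimpleGraph W}
    (f : G ≃g H) (hH : H.Connected) (a b : V) : G.dist a b ≤ H.dist (f a) (f b) := by
  obtain ⟨p, hp⟩ := hH.exists_walk_length_eq_dist (f a) (f b)
  calc G.dist a b
      ≤ ((p.map f.symm.toHom).copy (f.toEquiv.symm_apply_apply a)
        (f.toEquiv.symm_apply_apply b)).length := SimpleGraph.dist_le _
    _ = p.length := (SimpleGraph.Walk.length_copy _ _ _).trans (SimpleGraph.Walk.length_map _ _)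
    _ = H.dist (f a) (f b) := hp

lemma transmission_le_of_iso_star {V : Type*} [Fintype V] {T : SimpleGraph V}
    (hn : 3 ≤ Fintype.card V) (f : T ≃g _root_.starGraph (Fintype.card V)) (a : V) :
    transmission T a ≤ 2 * Fintype.card V - 3 := by
  haveI : NeZero (Fintype.card V) := ⟨by omega⟩
  have h1 : transmission T a ≤ ∑ v : V, (_root_.starGraph (Fintype.card V)).dist (f a) (f v) :=
    Finset.sum_le_sum fun v _ => dist_le_of_iso f starGraph_connected a v
  have h2 : ∑ v : V, (_root_.starGraph (Fintype.card V)).dist (f a) (f v)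
      = transmission (_root_.starGraph (Fintype.card V)) (f a) := by
    rw [transmission]
    exact Fintype.sum_equiv f.toEquiv _ _ fun v => rfl
  calc transmission T a ≤ _ := h1
  _ = _ := h2
  _ ≤ 2 * Fintype.card V - 3 := starGraph_transmission hn (f a)

-- a tree with a dominating vertex is the star
lemma iso_star_of_center {V : Type*} [Fintype V] {T : SimpleGraph V} (hT : T.IsTree)
    {w : V} (hw : ∀ v, v ≠ w → T.Adj w v) : Nonempty (T ≃g _root_.starGraph (Fintype.card V)) := by
  classical
  haveI : NeZero (Fintype.card V) := ⟨by
    have : 0 < Fintype.card V := Fintype.card_pos_iff.mpr ⟨w⟩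
    omega⟩
  have hadj : ∀ a b : V, T.Adj a b ↔ a ≠ b ∧ (a = w ∨ b = w) := by
    intro a b
    constructor
    · intro h
      refine ⟨h.ne, ?_⟩
      by_contra hc
      push_neg at hc
      obtain ⟨ha, hb⟩ := hc
      -- two distinct paths from w to b
      have hpath : (SimpleGraph.Walk.cons (hw a ha)
          (SimpleGraph.Walk.cons h SimpleGraph.Walk.nil)).IsPath := by
        simp [SimpleGraph.Walk.isPath_def]
        exact ⟨⟨Ne.symm ha, Ne.symm hb⟩, h.ne⟩
      have hpq := hT.IsAcyclic.path_unique (SimpleGraph.Path.singleton (hw b hb))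
        ⟨SimpleGraph.Walk.cons (hw a ha) (SimpleGraph.Walk.cons h SimpleGraph.Walk.nil), hpath⟩
      have hlen := congrArg (fun p : T.Path w b => (p : T.Walk w b).length) hpq
      simp [SimpleGraph.Path.singleton] at hlen
    · rintro ⟨hne, rfl | rfl⟩
      · exact hw b hne.symm
      · exact (hw a hne).symm
  let g := Fintype.equivFin V
  let e : V ≃ Fin (Fintype.card V) := g.trans (Equiv.swap (g w) 0)
  have hew : e w = 0 := by simp [e, Equiv.swap_apply_left]
  have hez : ∀ a, e a = 0 ↔ a = w := by
    intro a
    rw [← hew]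
    exact ⟨fun h => e.injective h, fun h => h ▸ rfl⟩
  refine ⟨⟨e, ?_⟩⟩
  intro a b
  rw [_root_.starGraph_adj, hadj, hez, hez]
  simp only [ne_eq, EmbeddingLike.apply_eq_iff_eq]

theorem stmt17 {V : Type*} [Fintype V] (T : SimpleGraph V) (hT : T.IsTree)
    (hn : 3 ≤ Fintype.card V) :
    gamma T ≤ (Fintype.card V : ℝ) / (2 * (Fintype.card V : ℝ) - 3) ∧
      (gamma T = (Fintype.card V : ℝ) / (2 * (Fintype.card V : ℝ) - 3) ↔
        Nonempty (T ≃g _root_.starGraph (Fintype.card V))) := by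
  classical
  have hconn := hT.isConnected
  have hne : Nonempty V := Fintype.card_pos_iff.mp (by omega)
  obtain ⟨u, -, humax⟩ := Finset.exists_max_image Finset.univ (transmission T)
    ⟨Classical.arbitrary V, Finset.mem_univ _⟩
  have humax' : ∀ v, transmission T v ≤ transmission T u := fun v => humax v (Finset.mem_univ v)
  have hg : gamma T = (Fintype.card V : ℝ) / (transmission T u : ℝ) :=
    gamma_eq hconn (by omega) humax'
  obtain ⟨u0, w0, hleaf⟩ := exists_leaf hT (by omega)
  have hl : 2 * Fintype.card V - 3 ≤ transmission T u0 := leaf_transmission hconn hleaf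
  have htmax_ge : 2 * Fintype.card V - 3 ≤ transmission T u := le_trans hl (humax' u0)
  have hcastn : (3:ℝ) ≤ (Fintype.card V : ℝ) := by exact_mod_cast hn
  have h2n3pos : (0:ℝ) < 2 * (Fintype.card V : ℝ) - 3 := by linarith
  have hNpos : (0:ℝ) < (Fintype.card V : ℝ) := by linarith
  have hcast23 : ((2 * Fintype.card V - 3 : ℕ) : ℝ) = 2 * (Fintype.card V : ℝ) - 3 := by
    have h3 : 3 ≤ 2 * Fintype.card V := by omega
    push_cast [Nat.cast_sub h3]
    ring
  have htge : 2 * (Fintype.card V : ℝ) - 3 ≤ (transmission T u : ℝ) := by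
    rw [← hcast23]
    exact_mod_cast htmax_ge
  have htpos : (0:ℝ) < (transmission T u : ℝ) := lt_of_lt_of_le h2n3pos htge
  constructor
  · rw [hg]
    exact div_le_div_of_nonneg_left hNpos.le h2n3pos htge
  constructor
  · intro heq
    rw [hg] at heq
    have htr_eq : (transmission T u : ℝ) = 2 * (Fintype.card V : ℝ) - 3 := by
      rw [div_eq_div_iff htpos.ne' h2n3pos.ne'] at heq
      have := mul_left_cancel₀ hNpos.ne' (by linarith : (Fintype.card V : ℝ) *
        (2 * (Fintype.card V : ℝ) - 3) = (Fintype.card V : ℝ) * (transmission T u : ℝ))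
      linarith
    have htr_nat : transmission T u = 2 * Fintype.card V - 3 := by
      have : ((transmission T u : ℕ) : ℝ) = ((2 * Fintype.card V - 3 : ℕ) : ℝ) := by
        rw [hcast23, htr_eq]
      exact_mod_cast this
    have hcenter : ∀ v, v ≠ w0 → T.Adj w0 v := by
      intro z hz
      by_contra hnadj
      have hbig := leaf_transmission_nonstar hconn hleaf hz hnadj
      have hle := humax' u0
      omega
    exact iso_star_of_center hT hcenter
  · rintro ⟨f⟩
    have hub : transmission T u ≤ 2 * Fintype.card V - 3 := transmission_le_of_iso_star hn f u
    have heq : transmission T u = 2 * Fintype.card V - 3 := le_antisymm hub htmax_ge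
    rw [hg, heq, hcast23]
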